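/- If R and S are conversion equivalent canonical TRSs that are both compatible with the same reduction order > (ℓ > r for every rule), then R and S are literally similar. -/

import Mathlib

namespace KB

-- Generic ARS notions
def NF {α : Type _} (r : α → α → Prop) (a : α) : Prop := ∀ b, ¬ r a b

def SymmCl {α : Type _} (r : α → α → Prop) (a b : α) : Prop := r a b ∨ r b a

def Conv {α : Type _} (r : α → α → Prop) : α → α → Prop :=
  Relation.ReflTransGen (SymmCl r)

def Joinable {α : Type _} (r : α → α → Prop) (a b : α) : Prop :=
  ∃ c, Relation.ReflTransGen r a c ∧ Relation.ReflTransGen r b c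

def Confluent {α : Type _} (r : α → α → Prop) : Prop :=
  ∀ a b c, Relation.ReflTransGen r a b → Relation.ReflTransGen r a c → Joinable r b c

def Terminating {α : Type _} (r : α → α → Prop) : Prop :=
  WellFounded (fun a b => r b a)

def Complete {α : Type _} (r : α → α → Prop) : Prop := Terminating r ∧ Confluent r

def NormTo {α : Type _} (r : α → α → Prop) (a b : α) : Prop :=
  Relation.ReflTransGen r a b ∧ NF r b

-- First-order terms
inductive Term (F V : Type) : Type where
  | var : V → Term F V
  | app : F → List (Term F V) → Term F V

variable {F V : Type}

def Term.subst (σ : V → Term F V) : Term F V → Term F V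
  | .var x => σ x
  | .app f ts => .app f (ts.attach.map fun t => Term.subst σ t.1)
decreasing_by
  simp only [Term.app.sizeOf_spec]
  have := List.sizeOf_lt_of_mem t.2
  omega

def Term.rename (π : V → V) (t : Term F V) : Term F V :=
  t.subst (fun x => Term.var (π x))

inductive Ctx (F V : Type) : Type where
  | hole : Ctx F V
  | cons : F → List (Term F V) → Ctx F V → List (Term F V) → Ctx F V

def Ctx.fill : Ctx F V → Term F V → Term F V
  | .hole, t => t
  | .cons f l C r, t => Term.app f (l ++ C.fill t :: r)

abbrev TRS (F V : Type) := Set (Term F V × Term F V)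

def Step (R : TRS F V) (s t : Term F V) : Prop :=
  ∃ (C : Ctx F V) (σ : V → Term F V) (l r : Term F V),
    (l, r) ∈ R ∧ s = C.fill (l.subst σ) ∧ t = C.fill (r.subst σ)

inductive InVars (x : V) : Term F V → Prop where
  | var : InVars x (Term.var x)
  | app {f : F} {ts : List (Term F V)} {t : Term F V} :
      t ∈ ts → InVars x t → InVars x (Term.app f ts)

def WellFormedRule (l r : Term F V) : Prop :=
  (∀ x : V, l ≠ Term.var x) ∧ ∀ x, InVars x r → InVars x l

def IsTRS (R : TRS F V) : Prop := ∀ p ∈ R, WellFormedRule p.1 p.2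

inductive Ground : Term F V → Prop where
  | app {f : F} {ts : List (Term F V)} : (∀ t ∈ ts, Ground t) → Ground (Term.app f ts)

def GroundSys (R : TRS F V) : Prop := ∀ p ∈ R, Ground p.1 ∧ Ground p.2

def LeftReduced (R : TRS F V) : Prop := ∀ p ∈ R, NF (Step (R \ {p})) p.1
def RightReduced (R : TRS F V) : Prop := ∀ p ∈ R, NF (Step R) p.2
def Reduced (R : TRS F V) : Prop := LeftReduced R ∧ RightReduced R

def RuleVariant (p q : Term F V × Term F V) : Prop :=
  ∃ π : V → V, Function.Bijective π ∧ p.1 = q.1.rename π ∧ p.2 = q.2.rename π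

def LitSim (R S : TRS F V) : Prop :=
  (∀ p ∈ R, ∃ q ∈ S, RuleVariant p q) ∧ (∀ q ∈ S, ∃ p ∈ R, RuleVariant q p)

def Encompass (s t : Term F V) : Prop :=
  ∃ (C : Ctx F V) (σ : V → Term F V), s = C.fill (t.subst σ)

def PEncompass (s t : Term F V) : Prop := Encompass s t ∧ ¬ Encompass t s

def ReductionOrder (gt : Term F V → Term F V → Prop) : Prop :=
  Transitive gt ∧ WellFounded (fun a b => gt b a) ∧
  (∀ (C : Ctx F V) s t, gt s t → gt (C.fill s) (C.fill t)) ∧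
  (∀ (σ : V → Term F V) s t, gt s t → gt (s.subst σ) (t.subst σ))

-- positions
def subt : List ℕ → Term F V → Option (Term F V)
  | [], t => some t
  | _ :: _, Term.var _ => none
  | i :: p, Term.app _ ts => (ts[i]?).bind (subt p)

def repl : List ℕ → Term F V → Term F V → Option (Term F V)
  | [], _, u => some u
  | _ :: _, Term.var _, _ => none
  | i :: p, Term.app f ts, u =>
      (ts[i]?).bind fun w => (repl p w u).map fun w' => Term.app f (ts.set i w')

def FunPos (p : List ℕ) (t : Term F V) : Prop :=
  ∃ f ts, subt p t = some (Term.app f ts)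

def Unifier (σ : V → Term F V) (s t : Term F V) : Prop := s.subst σ = t.subst σ

def IsMGU (σ : V → Term F V) (s t : Term F V) : Prop :=
  Unifier σ s t ∧ ∀ τ, Unifier τ s t → ∃ ρ, ∀ x, (σ x).subst ρ = τ x

def VarsDisjoint (p q : Term F V × Term F V) : Prop :=
  ∀ x, ¬ ((InVars x p.1 ∨ InVars x p.2) ∧ (InVars x q.1 ∨ InVars x q.2))

def Overlap (R : TRS F V) (l1 r1 : Term F V) (p : List ℕ) (l2 r2 : Term F V) : Prop :=
  (∃ q ∈ R, RuleVariant (l1, r1) q) ∧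
  (∃ q ∈ R, RuleVariant (l2, r2) q) ∧
  VarsDisjoint (l1, r1) (l2, r2) ∧
  FunPos p l2 ∧
  (∃ w, subt p l2 = some w ∧ ∃ σ, Unifier σ l1 w) ∧
  (p = [] → ¬ RuleVariant (l1, r1) (l2, r2))

def CPeak (R : TRS F V) (t : Term F V) (p : List ℕ) (s u : Term F V) : Prop :=
  ∃ (l1 r1 l2 r2 : Term F V) (σ : V → Term F V) (w : Term F V),
    Overlap R l1 r1 p l2 r2 ∧ subt p l2 = some w ∧ IsMGU σ l1 w ∧
    s = l2.subst σ ∧ u = r2.subst σ ∧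
    repl p (l2.subst σ) (r1.subst σ) = some t

def PrimeCPeak (R : TRS F V) (t : Term F V) (p : List ℕ) (s u : Term F V) : Prop :=
  CPeak R t p s u ∧
  ∀ w v, subt p s = some w → (∃ q, q ≠ [] ∧ subt q w = some v) → NF (Step R) v

def PCP (R : TRS F V) : Set (Term F V × Term F V) :=
  { e | ∃ p s, PrimeCPeak R e.1 p s e.2 }

def Nabla (R : TRS F V) (s u w : Term F V) : Prop :=
  Relation.TransGen (Step R) s u ∧ Relation.TransGen (Step R) s w ∧
  (Joinable (Step R) u w ∨ SymmCl (Step (PCP R)) u w)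

-- counted conversions and rewrite sequences
inductive ConvN {α : Type _} (r : α → α → Prop) : ℕ → ℕ → α → α → Prop where
  | refl (a : α) : ConvN r 0 0 a a
  | fwd {l n : ℕ} {a b c : α} : r a b → ConvN r l n b c → ConvN r l (n + 1) a c
  | bwd {l n : ℕ} {a b c : α} : r b a → ConvN r l n b c → ConvN r (l + 1) n a c

inductive StepsN {α : Type _} (r : α → α → Prop) : ℕ → α → α → Prop where
  | refl (a : α) : StepsN r 0 a a
  | step {n : ℕ} {a b c : α} : r a b → StepsN r n b c → StepsN r (n + 1) a c

def RandomDescent {α : Type _} (r : α → α → Prop) : Prop :=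
  ∀ l m a b, ConvN r l m a b → NF r b → ∃ n, StepsN r n a b ∧ n + l = m



section Auxiliary

variable {F V : Type}

-- ## Abstract rewriting lemmas

theorem exists_norm {α : Type _} {r : α → α → Prop} (h : Terminating r) (a : α) :
    ∃ b, NormTo r a b := by
  induction a using h.induction with
  | _ a ih =>
    by_cases hnf : NF r a
    · exact ⟨a, .refl, hnf⟩
    · simp only [NF, not_forall, not_not] at hnf
      obtain ⟨b, hb⟩ := hnf
      obtain ⟨c, hc1, hc2⟩ := ih b hb
      exact ⟨c, .head hb hc1, hc2⟩

theorem rtg_conv {α : Type _} {r : α → α → Prop} {a b : α}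
    (h : Relation.ReflTransGen r a b) : Conv r a b :=
  Relation.ReflTransGen.mono (p := SymmCl r) (fun _ _ h => Or.inl h) _ _ h

theorem conv_symm {α : Type _} {r : α → α → Prop} {a b : α} (h : Conv r a b) : Conv r b a := by
  induction h with
  | refl => exact .refl
  | tail hab hbc ih => exact .trans (.single (Or.symm hbc)) ih

theorem church_rosser {α : Type _} {r : α → α → Prop} {a b : α}
    (hc : Confluent r) (h : Conv r a b) : Joinable r a b := by
  induction h with
  | refl => exact ⟨a, .refl, .refl⟩
  | tail hbc hc' ih =>
      obtain ⟨d, had, hbd⟩ := ih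
      rename_i b c
      rcases hc' with hbc' | hcb
      · obtain ⟨e, hde, hce⟩ := hc b d c hbd (.single hbc')
        exact ⟨e, had.trans hde, hce⟩
      · exact ⟨d, had, .head hcb hbd⟩

theorem nf_rtg_eq {α : Type _} {r : α → α → Prop} {a b : α}
    (hnf : NF r a) (h : Relation.ReflTransGen r a b) : a = b := by
  cases h.cases_head with
  | inl h => exact h
  | inr h => exact absurd h.choose_spec.1 (hnf _)

theorem rtg_gt {α : Type _} {r gt : α → α → Prop} {a b : α}
    (htr : Transitive gt) (hsub : ∀ a b, r a b → gt a b)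
    (h : Relation.ReflTransGen r a b) : a = b ∨ gt a b := by
  induction h with
  | refl => exact Or.inl rfl
  | tail hab hbc ih =>
      rcases ih with rfl | hab'
      · exact Or.inr (hsub _ _ hbc)
      · exact Or.inr (htr hab' (hsub _ _ hbc))

/-- Normal forms of one system are normal forms of an equivalent one. -/
theorem nf_subset {α : Type _} {r s gt : α → α → Prop} (htr : Transitive gt)
    (hwf : WellFounded (fun a b => gt b a))
    (hr : ∀ a b, r a b → gt a b) (hs : ∀ a b, s a b → gt a b)
    (hconv : ∀ a b, Conv r a b ↔ Conv s a b)
    (hrc : Confluent r) (hst : Terminating s)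
    {a : α} (ha : NF r a) : NF s a := by
  obtain ⟨b, hab, hb⟩ := exists_norm hst a
  have hconvr : Conv r a b := (hconv a b).mpr (rtg_conv hab)
  obtain ⟨c, hac, hbc⟩ := church_rosser hrc hconvr
  have hca : c = a := (nf_rtg_eq ha hac).symm
  subst hca
  rcases rtg_gt htr hr hbc with hba | hba
  · exact hba ▸ hb
  · rcases rtg_gt htr hs hab with hab' | hab'
    · exact hab' ▸ hb
    · exact absurd (htr hab' hba) fun h => (hwf.isIrrefl.irrefl _) h

-- ## Term infrastructure

theorem Term.my_induct {P : Term F V → Prop} (hv : ∀ x, P (.var x))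
    (ha : ∀ f ts, (∀ t ∈ ts, P t) → P (.app f ts)) : ∀ t, P t
  | .var x => hv x
  | .app f ts => ha f ts (fun t _ => Term.my_induct hv ha t)
decreasing_by
  simp only [Term.app.sizeOf_spec]
  have := List.sizeOf_lt_of_mem (by assumption : t ∈ ts)
  omega

theorem subst_var (σ : V → Term F V) (x : V) : (Term.var x : Term F V).subst σ = σ x := by
  rw [Term.subst]

theorem subst_app (σ : V → Term F V) (f : F) (ts : List (Term F V)) :
    (Term.app f ts).subst σ = .app f (ts.map fun t => t.subst σ) := by
  rw [Term.subst]; simp [List.attach_map_val]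

theorem subst_subst (σ τ : V → Term F V) (t : Term F V) :
    (t.subst σ).subst τ = t.subst (fun x => (σ x).subst τ) := by
  induction t using Term.my_induct with
  | hv x => simp [subst_var]
  | ha f ts ih => simp only [subst_app, List.map_map]; congr 1
                  exact List.map_congr_left fun t ht => ih t ht

theorem subst_congr {σ τ : V → Term F V} {t : Term F V}
    (h : ∀ x, InVars x t → σ x = τ x) : t.subst σ = t.subst τ := by
  induction t using Term.my_induct with
  | hv x => simp only [subst_var]; exact h x .var
  | ha f ts ih =>
      simp only [subst_app]; congr 1
      exact List.map_congr_left fun t ht => ih t ht fun x hx => h x (.app ht hx)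

theorem subst_id (t : Term F V) : t.subst Term.var = t := by
  induction t using Term.my_induct with
  | hv x => simp [subst_var]
  | ha f ts ih => simp only [subst_app]
                  conv_rhs => rw [← List.map_id ts]
                  exact congrArg _ (List.map_congr_left fun t ht => ih t ht)

theorem list_map_eq_self {α : Type _} {g : α → α} {l : List α} (h : l.map g = l) :
    ∀ a ∈ l, g a = a := by
  induction l with
  | nil => simp
  | cons b l ih =>
      simp only [List.map_cons, List.cons.injEq] at h
      intro a ha
      rcases List.mem_cons.mp ha with rfl | ha
      · exact h.1
      · exact ih h.2 a ha

theorem subst_eq_self_vars {σ : V → Term F V} {t : Term F V}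
    (h : t.subst σ = t) : ∀ x, InVars x t → σ x = Term.var x := by
  induction t using Term.my_induct with
  | hv x => rw [subst_var] at h; rintro y hy; cases hy; exact h
  | ha f ts ih =>
      rw [subst_app] at h
      intro x hx
      cases hx with
      | app ht hx =>
        rename_i t
        exact ih t ht (list_map_eq_self (by injection h) t ht) x hx

def tsize : Term F V → ℕ
  | .var _ => 1
  | .app _ ts => 1 + (ts.attach.map fun t => tsize t.1).sum
decreasing_by
  simp only [Term.app.sizeOf_spec]
  have := List.sizeOf_lt_of_mem t.2
  omega

theorem tsize_var (x : V) : tsize (Term.var x : Term F V) = 1 := by rw [tsize]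

theorem tsize_app (f : F) (ts : List (Term F V)) :
    tsize (Term.app f ts) = 1 + (ts.map tsize).sum := by
  rw [tsize]; simp [List.attach_map_val]

theorem tsize_pos (t : Term F V) : 1 ≤ tsize t := by
  cases t with
  | var x => rw [tsize_var]
  | app f ts => rw [tsize_app]; omega

theorem tsize_subst_ge (σ : V → Term F V) (t : Term F V) : tsize t ≤ tsize (t.subst σ) := by
  induction t using Term.my_induct with
  | hv x => rw [subst_var, tsize_var]; exact tsize_pos _
  | ha f ts ih =>
      rw [subst_app, tsize_app, tsize_app, List.map_map]
      have : (ts.map tsize).sum ≤ (ts.map (tsize ∘ fun t => t.subst σ)).sum :=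
        List.sum_le_sum fun t ht => ih t ht
      omega

def Ctx.substC (σ : V → Term F V) : Ctx F V → Ctx F V
  | .hole => .hole
  | .cons f l C r => .cons f (l.map (·.subst σ)) (C.substC σ) (r.map (·.subst σ))

theorem fill_subst (σ : V → Term F V) (C : Ctx F V) (t : Term F V) :
    (C.fill t).subst σ = (C.substC σ).fill (t.subst σ) := by
  induction C with
  | hole => rfl
  | cons f l C r ih =>
      simp only [Ctx.fill, Ctx.substC, subst_app, List.map_append, List.map_cons, ih]

def Ctx.comp : Ctx F V → Ctx F V → Ctx F V
  | .hole, D => D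
  | .cons f l C r, D => .cons f l (C.comp D) r

theorem fill_comp (C D : Ctx F V) (t : Term F V) :
    (C.comp D).fill t = C.fill (D.fill t) := by
  induction C with
  | hole => rfl
  | cons f l C r ih => simp only [Ctx.comp, Ctx.fill, ih]

theorem comp_eq_hole {C D : Ctx F V} (h : C.comp D = .hole) : C = .hole ∧ D = .hole := by
  cases C with
  | hole => exact ⟨rfl, h⟩
  | cons f l C r => simp [Ctx.comp] at h

theorem substC_eq_hole {σ : V → Term F V} {C : Ctx F V} (h : C.substC σ = .hole) :
    C = .hole := by
  cases C with
  | hole => rfl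
  | cons f l C r => simp [Ctx.substC] at h

theorem tsize_fill_gt {C : Ctx F V} (h : C ≠ .hole) (t : Term F V) :
    tsize t < tsize (C.fill t) := by
  cases C with
  | hole => exact absurd rfl h
  | cons f l C r =>
      simp only [Ctx.fill, tsize_app, List.map_append, List.map_cons, List.sum_append,
        List.sum_cons]
      have h1 : tsize t ≤ tsize (C.fill t) := by
        cases C with
        | hole => exact le_of_eq rfl
        | cons g l' C' r' => exact le_of_lt (tsize_fill_gt (by simp) t)
      omega

theorem fill_eq_self {C : Ctx F V} {σ : V → Term F V} {t : Term F V}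
    (h : t = C.fill (t.subst σ)) : C = .hole ∧ t.subst σ = t := by
  have h1 : tsize t ≤ tsize (t.subst σ) := tsize_subst_ge σ t
  rcases eq_or_ne C Ctx.hole with rfl | hC
  · exact ⟨rfl, h.symm⟩
  · have := tsize_fill_gt hC (t.subst σ)
    rw [← h] at this
    omega

theorem varsFinite (t : Term F V) : {x | InVars x t}.Finite := by
  induction t using Term.my_induct with
  | hv x =>
      apply Set.Finite.subset (Set.finite_singleton x)
      intro y hy; cases hy; rfl
  | ha f ts ih =>
      apply Set.Finite.subset (Set.Finite.biUnion ts.finite_toSet fun t ht => ih t ht)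
      intro y hy
      cases hy with
      | app ht hx => exact Set.mem_biUnion ht hx

-- ## Step lemmas

theorem step_gt {gt : Term F V → Term F V → Prop} (hgt : ReductionOrder gt) {R : TRS F V}
    (hRgt : ∀ p ∈ R, gt p.1 p.2) : ∀ a b, Step R a b → gt a b := by
  rintro a b ⟨C, σ, l, r, hmem, rfl, rfl⟩
  exact hgt.2.2.1 C _ _ (hgt.2.2.2 σ _ _ (hRgt (l, r) hmem))

theorem step_subst {R : TRS F V} {s t : Term F V} (h : Step R s t) (τ : V → Term F V) :
    Step R (s.subst τ) (t.subst τ) := by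
  obtain ⟨C, σ, l, r, hmem, rfl, rfl⟩ := h
  exact ⟨C.substC τ, fun x => (σ x).subst τ, l, r, hmem,
    by rw [fill_subst, subst_subst], by rw [fill_subst, subst_subst]⟩

theorem step_rule {R : TRS F V} {l r : Term F V} (h : (l, r) ∈ R) : Step R l r :=
  ⟨.hole, Term.var, l, r, h, by simp [Ctx.fill, subst_id], by simp [Ctx.fill, subst_id]⟩

-- ## The main half lemma

theorem half_litsim (R S : TRS F V) (hS : IsTRS S)
    (hRcan : Complete (Step R) ∧ Reduced R)
    (hScan : Complete (Step S) ∧ Reduced S)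
    (hconv : ∀ a b, Conv (Step R) a b ↔ Conv (Step S) a b)
    (gt : Term F V → Term F V → Prop) (hgt : ReductionOrder gt)
    (hRgt : ∀ p ∈ R, gt p.1 p.2) (hSgt : ∀ p ∈ S, gt p.1 p.2) :
    ∀ p ∈ R, ∃ q ∈ S, RuleVariant p q := by
  classical
  rintro ⟨l, r⟩ hp
  have hgtR : ∀ a b, Step R a b → gt a b := step_gt hgt hRgt
  have hgtS : ∀ a b, Step S a b → gt a b := step_gt hgt hSgt
  have hNF_RS : ∀ a, NF (Step R) a → NF (Step S) a :=
    fun a ha => nf_subset hgt.1 hgt.2.1 hgtR hgtS hconv hRcan.1.2 hScan.1.1 ha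
  have hNF_SR : ∀ a, NF (Step S) a → NF (Step R) a :=
    fun a ha => nf_subset hgt.1 hgt.2.1 hgtS hgtR (fun a b => (hconv a b).symm)
      hScan.1.2 hRcan.1.1 ha
  have hrNF : NF (Step R) r := hRcan.2.2 (l, r) hp
  have hstep : Step R l r := step_rule hp
  have hrNFS : NF (Step S) r := hNF_RS r hrNF
  have hconvS : Conv (Step S) l r :=
    (hconv l r).mp (Relation.ReflTransGen.single (Or.inl hstep))
  obtain ⟨c, hlc, hrc⟩ := church_rosser hScan.1.2 hconvS
  have hrc' : r = c := nf_rtg_eq hrNFS hrc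
  subst hrc'
  have hlr_ne : l ≠ r := by
    intro h
    exact (hgt.2.1.isIrrefl.irrefl l) (h ▸ hgtR l r hstep)
  rcases hlc.cases_head with heq | ⟨t, hlt, htr⟩
  · exact absurd heq hlr_ne
  obtain ⟨C, σ, l₂, r₂, h₂, hl_eq, ht_eq⟩ := hlt
  -- l₂ is S-reducible hence R-reducible
  have hl₂notNF : ¬ NF (Step R) l₂ := fun h => (hNF_RS l₂ h) r₂ (step_rule h₂)
  obtain ⟨u, hu⟩ : ∃ u, Step R l₂ u := by
    by_contra hno
    push_neg at hno
    exact hl₂notNF fun b hb => hno b hb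
  obtain ⟨C', τ', l', r', h', hl₂eq, hueq⟩ := hu
  have hlD : l = (C.comp (C'.substC σ)).fill (l'.subst (fun x => (τ' x).subst σ)) := by
    rw [fill_comp, ← subst_subst, ← fill_subst, ← hl₂eq, ← hl_eq]
  have hrule : (l', r') = (l, r) := by
    by_contra hne
    have hmem' : (l', r') ∈ R \ {(l, r)} := ⟨h', by simpa using hne⟩
    exact hRcan.2.1 (l, r) hp _
      ⟨_, _, l', r', hmem', hlD, rfl⟩
  rw [Prod.ext_iff] at hrule
  obtain ⟨hl', hr'⟩ := hrule
  simp only at hl' hr'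
  rw [hl'] at hlD hl₂eq
  obtain ⟨hDhole, hsubst_eq⟩ := fill_eq_self hlD
  obtain ⟨hChole, hC'σ⟩ := comp_eq_hole hDhole
  have hC'hole := substC_eq_hole hC'σ
  subst hChole hC'hole
  simp only [Ctx.fill] at hl_eq hl₂eq ht_eq
  -- hl_eq : l = l₂.subst σ ; hl₂eq : l₂ = l.subst τ'
  have hl₂fix : l₂.subst (fun y => (σ y).subst τ') = l₂ := by
    rw [← subst_subst, ← hl_eq, ← hl₂eq]
  have hσid : ∀ y, InVars y l₂ → (σ y).subst τ' = Term.var y := subst_eq_self_vars hl₂fix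
  have hσvar : ∀ y, InVars y l₂ → ∃ x, σ y = Term.var x ∧ τ' x = Term.var y := by
    intro y hy
    have h1 := hσid y hy
    cases hσy : σ y with
    | var x => rw [hσy, subst_var] at h1; exact ⟨x, rfl, h1⟩
    | app f ts => rw [hσy, subst_app] at h1; exact absurd h1 (by simp)
  have hinj : ∀ y y', InVars y l₂ → InVars y' l₂ → σ y = σ y' → y = y' := by
    intro y y' hy hy' he
    have h1 := hσid y hy
    have h2 := hσid y' hy'
    rw [he] at h1
    injection h1.symm.trans h2
  -- vars of r₂ are vars of l₂
  have hvars_r₂ : ∀ x, InVars x r₂ → InVars x l₂ := (hS (l₂, r₂) h₂).2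
  -- r₂σ is an S-normal form
  have hr₂NF : NF (Step S) (r₂.subst σ) := by
    intro u hu
    have hstep' := step_subst hu τ'
    have hfix : (r₂.subst σ).subst τ' = r₂ := by
      rw [subst_subst]
      rw [subst_congr (τ := Term.var) fun x hx => hσid x (hvars_r₂ x hx)]
      exact subst_id r₂
    rw [hfix] at hstep'
    exact hScan.2.2 (l₂, r₂) h₂ _ hstep'
  -- r = r₂σ
  have hlr₂ : Step S l (r₂.subst σ) :=
    ⟨.hole, σ, l₂, r₂, h₂, hl_eq, rfl⟩
  have hconv2 : Conv (Step S) r (r₂.subst σ) :=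
    (conv_symm (rtg_conv hlc)).trans (Relation.ReflTransGen.single (Or.inl hlr₂))
  obtain ⟨d, hd1, hd2⟩ := church_rosser hScan.1.2 hconv2
  have hr_eq : r = r₂.subst σ := (nf_rtg_eq hrNFS hd1).trans (nf_rtg_eq hr₂NF hd2).symm
  -- build the permutation
  set A : Set V := {y | InVars y l₂} with hA
  have hAfin : A.Finite := varsFinite l₂
  let g : V → V := fun y => if h : ∃ x, σ y = Term.var x then h.choose else y
  have hg : ∀ y ∈ A, σ y = Term.var (g y) := by
    intro y hy
    obtain ⟨x, hx, -⟩ := hσvar y hy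
    have hy' : ∃ x, σ y = Term.var x := ⟨x, hx⟩
    simp only [g, dif_pos hy']
    exact hy'.choose_spec
  have hginj : ∀ y y' : A, g y = g y' → y = y' := by
    rintro ⟨y, hy⟩ ⟨y', hy'⟩ he
    have : σ y = σ y' := by rw [hg y hy, hg y' hy', he]
    exact Subtype.ext (hinj y y' hy hy' this)
  let f : A ↪ V := ⟨fun y => g y, fun y y' he => hginj y y' he⟩
  have hext : ∃ π : V ≃ V, ∀ y : A, π y = f y := by
    by_cases hVfin : Finite V
    · exact Cardinal.extend_function_finite f ⟨Equiv.refl V⟩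
    · have : Infinite V := not_finite_iff_infinite.mp hVfin
      refine Cardinal.extend_function_of_lt f ?_ ⟨Equiv.refl V⟩
      calc (Cardinal.mk A) < Cardinal.aleph0 := hAfin.lt_aleph0
        _ ≤ Cardinal.mk V := Cardinal.aleph0_le_mk V
  obtain ⟨π, hπ⟩ := hext
  refine ⟨(l₂, r₂), h₂, π, π.bijective, ?_, ?_⟩
  · show l = l₂.rename π
    rw [Term.rename, hl_eq]
    apply subst_congr
    intro x hx
    rw [hg x hx, (hπ ⟨x, hx⟩ : π x = g x)]
    rfl
  · show r = r₂.rename π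
    rw [Term.rename, hr_eq]
    apply subst_congr
    intro x hx
    have hx' : x ∈ A := hvars_r₂ x hx
    rw [hg x hx', (hπ ⟨x, hx'⟩ : π x = g x)]
    rfl

end Auxiliary

/-- Equivalent canonical TRSs compatible with the same reduction order are
literally similar. -/
theorem canonical_equiv_litsim {F V : Type} (R S : TRS F V)
    (hR : IsTRS R) (hS : IsTRS S)
    (hRcan : Complete (Step R) ∧ Reduced R)
    (hScan : Complete (Step S) ∧ Reduced S)
    (hconv : ∀ a b, Conv (Step R) a b ↔ Conv (Step S) a b)
    (gt : Term F V → Term F V → Prop) (hgt : ReductionOrder gt)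
    (hRgt : ∀ p ∈ R, gt p.1 p.2) (hSgt : ∀ p ∈ S, gt p.1 p.2) :
    LitSim R S := by
  constructor
  · exact half_litsim R S hS hRcan hScan hconv gt hgt hRgt hSgt
  · exact half_litsim S R hR hScan hRcan (fun a b => (hconv a b).symm) gt hgt hSgt hRgt

end KB
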